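/- Let X be a separable metric space. Then X is totally bounded if and only if for every normalized positive linear functional Λ on C_b(X) there exists a sequence (P_n)_{n∈ℕ} of finitely supported Borel probability measures on X such that ∫ f dP_n → Λ f as n → ∞ for every uniformly continuous f ∈ C_b(X). -/

import Mathlib

open MeasureTheory Filter Topology BoundedContinuousFunction
open scoped NNReal ENNReal


open MeasureTheory Filter Topology

lemma aux_sum_indicator_le {A : Set ℕ} (ν : ℕ → ℝ) (h0 : ∀ k, 0 ≤ ν k)
    (K : Finset ℕ) (m : ℕ) (hA : ∀ k ∈ K, k ∈ A → k < m) :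
    ∑ k ∈ K, A.indicator ν k ≤ ∑ k ∈ Finset.range m, ν k := by
  classical
  rw [Finset.sum_indicator_eq_sum_filter]
  refine Finset.sum_le_sum_of_subset_of_nonneg ?_ (fun k _ _ => h0 k)
  intro k hk
  simp only [Finset.mem_filter] at hk
  exact Finset.mem_range.2 (hA k hk.1 hk.2)

lemma aux_oscillation (ν : ℕ → ℕ → ℝ) (K : ℕ → Finset ℕ)
    (h0 : ∀ n k, 0 ≤ ν n k)
    (ht : ∀ᶠ n in atTop, 3/4 ≤ ∑ k ∈ K n, ν n k)
    (hk : ∀ k, Tendsto (fun n => ν n k) atTop (𝓝 0)) :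
    ∃ (A : Set ℕ) (φ ψ : ℕ → ℕ), Tendsto φ atTop atTop ∧ Tendsto ψ atTop atTop ∧
      (∀ j, 1/2 ≤ ∑ k ∈ K (φ j), A.indicator (ν (φ j)) k) ∧
      (∀ j, ∑ k ∈ K (ψ j), A.indicator (ν (ψ j)) k ≤ 1/4) := by
  classical
  have hsmall : ∀ m : ℕ, Tendsto (fun n => ∑ k ∈ Finset.range m, ν n k) atTop (𝓝 0) := by
    intro m
    have := tendsto_finset_sum (Finset.range m) (fun k (_ : k ∈ Finset.range m) => hk k)
    simpa using this
  have hpick : ∀ N M : ℕ, ∃ n, N < n ∧ 3/4 ≤ ∑ k ∈ K n, ν n k ∧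
      ∑ k ∈ Finset.range (M+1), ν n k ≤ 1/8 := by
    intro N M
    have h2 : ∀ᶠ n in atTop, ∑ k ∈ Finset.range (M+1), ν n k ≤ 1/8 :=
      (hsmall (M+1)).eventually_le_const (by norm_num)
    obtain ⟨n, hn⟩ := ((ht.and h2).and (eventually_gt_atTop N)).exists
    exact ⟨n, hn.2, hn.1.1, hn.1.2⟩
  choose nx hx1 hx2 hx3 using hpick
  -- state: (N, M, B)
  set step : ℕ × ℕ × Finset ℕ → ℕ × ℕ × Finset ℕ := fun p =>
    ((nx (nx p.1 p.2.1) (p.2.1 ⊔ (K (nx p.1 p.2.1)).sup id)),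
     ((p.2.1 ⊔ (K (nx p.1 p.2.1)).sup id) ⊔
        (K (nx (nx p.1 p.2.1) (p.2.1 ⊔ (K (nx p.1 p.2.1)).sup id))).sup id),
     (p.2.2 ∪ (K (nx p.1 p.2.1)).filter (fun k => p.2.1 < k))) with hstep
  set st : ℕ → ℕ × ℕ × Finset ℕ :=
    fun j => Nat.rec ((0 : ℕ), (0 : ℕ), (∅ : Finset ℕ)) (fun _ p => step p) j with hst
  have hsucc : ∀ j, st (j+1) = step (st j) := fun j => rfl
  set φ : ℕ → ℕ := fun j => nx (st j).1 (st j).2.1 with hφ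
  set M₁ : ℕ → ℕ := fun j => (st j).2.1 ⊔ (K (φ j)).sup id with hM₁
  set ψ : ℕ → ℕ := fun j => nx (φ j) (M₁ j) with hψ
  have hN1 : ∀ j, (st (j+1)).1 = ψ j := fun j => rfl
  have hM1 : ∀ j, (st (j+1)).2.1 = M₁ j ⊔ (K (ψ j)).sup id := fun j => rfl
  have hB1 : ∀ j, (st (j+1)).2.2 = (st j).2.2 ∪ (K (φ j)).filter (fun k => (st j).2.1 < k) :=
    fun j => rfl
  -- invariants
  have hNφ : ∀ j, (st j).1 < φ j := fun j => hx1 _ _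
  have hφψ : ∀ j, φ j < ψ j := fun j => hx1 _ _
  have hMmono : ∀ j, (st j).2.1 ≤ (st (j+1)).2.1 := by
    intro j; rw [hM1]; exact le_trans (le_sup_left) (le_sup_left)
  have hMmono' : ∀ j j', j ≤ j' → (st j).2.1 ≤ (st j').2.1 := by
    intro j j' h
    induction h with
    | refl => exact le_refl _
    | step h ih => exact le_trans ih (hMmono _)
  have hBle : ∀ j, ∀ k ∈ (st j).2.2, k ≤ (st j).2.1 := by
    intro j
    induction j with
    | zero => intro k hk; simp [hst] at hk
    | succ i ih =>
      intro k hk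
      rw [hB1] at hk
      rcases Finset.mem_union.1 hk with h | h
      · exact le_trans (ih k h) (hMmono i)
      · have hk2 : k ∈ K (φ i) := (Finset.mem_filter.1 h).1
        have : k ≤ (K (φ i)).sup id := Finset.le_sup (f := id) hk2
        rw [hM1]
        exact le_trans (le_trans this le_sup_right) le_sup_left
  have hBmono : ∀ j, (st j).2.2 ⊆ (st (j+1)).2.2 := by
    intro j; rw [hB1]; exact Finset.subset_union_left
  have hBmono' : ∀ j j', j ≤ j' → (st j).2.2 ⊆ (st j').2.2 := by
    intro j j' h
    induction h with
    | refl => exact subset_rfl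
    | step h ih => exact ih.trans (hBmono _)
  have hBnew : ∀ j j', j ≤ j' → ∀ k ∈ (st j').2.2, k ∈ (st j).2.2 ∨ (st j).2.1 < k := by
    intro j j' h
    induction h with
    | refl => exact fun k hk => Or.inl hk
    | @step m h ih =>
      intro k hk
      rw [hB1] at hk
      rcases Finset.mem_union.1 hk with hh | hh
      · exact ih k hh
      · right
        exact lt_of_le_of_lt (hMmono' j m h) (Finset.mem_filter.1 hh).2
  set A : Set ℕ := {k | ∃ j, k ∈ (st j).2.2} with hA
  refine ⟨A, φ, ψ, ?_, ?_, ?_, ?_⟩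
  · -- φ tendsto
    have hst1 : ∀ j, j ≤ (st j).1 := by
      intro j
      induction j with
      | zero => exact Nat.zero_le _
      | succ i ih =>
        rw [hN1]
        have := lt_trans (lt_of_le_of_lt ih (hNφ i)) (hφψ i)
        omega
    exact tendsto_atTop_mono (fun j => le_of_lt (lt_of_le_of_lt (hst1 j) (hNφ j))) tendsto_id
  · have hst1 : ∀ j, j ≤ (st j).1 := by
      intro j
      induction j with
      | zero => exact Nat.zero_le _
      | succ i ih =>
        rw [hN1]
        have := lt_trans (lt_of_le_of_lt ih (hNφ i)) (hφψ i)
        omega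
    have hle : ∀ j, j ≤ ψ j := fun j =>
      le_of_lt (lt_of_le_of_lt (hst1 j) (lt_trans (hNφ j) (hφψ j)))
    exact tendsto_atTop_mono hle tendsto_id
  · -- big
    intro j
    set S : Finset ℕ := (K (φ j)).filter (fun k => (st j).2.1 < k) with hS
    have hSA : ∀ k ∈ S, k ∈ A := by
      intro k hk
      exact ⟨j+1, by rw [hB1]; exact Finset.mem_union_right _ hk⟩
    have h1 : ∑ k ∈ K (φ j), (↑S : Set ℕ).indicator (ν (φ j)) k
        ≤ ∑ k ∈ K (φ j), A.indicator (ν (φ j)) k := by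
      refine Finset.sum_le_sum fun k hkK => ?_
      by_cases hks : k ∈ S
      · rw [Set.indicator_of_mem (by exact hks), Set.indicator_of_mem (hSA k hks)]
      · rw [Set.indicator_of_notMem (by exact hks)]
        exact Set.indicator_nonneg (fun _ _ => h0 _ _) _
    have h2 : ∑ k ∈ K (φ j), (↑S : Set ℕ).indicator (ν (φ j)) k = ∑ k ∈ S, ν (φ j) k :=
      Finset.sum_indicator_subset _ (Finset.filter_subset _ _)
    have h3 : ∑ k ∈ S, ν (φ j) k + ∑ k ∈ (K (φ j)).filter (fun k => ¬ (st j).2.1 < k), ν (φ j) k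
        = ∑ k ∈ K (φ j), ν (φ j) k := Finset.sum_filter_add_sum_filter_not _ _ _
    have h4 : ∑ k ∈ (K (φ j)).filter (fun k => ¬ (st j).2.1 < k), ν (φ j) k
        ≤ ∑ k ∈ Finset.range ((st j).2.1 + 1), ν (φ j) k := by
      refine Finset.sum_le_sum_of_subset_of_nonneg ?_ (fun k _ _ => h0 _ _)
      intro k hk
      have := (Finset.mem_filter.1 hk).2
      exact Finset.mem_range.2 (by omega)
    have h5 := hx2 (st j).1 (st j).2.1
    have h6 := hx3 (st j).1 (st j).2.1
    have := le_trans h4 h6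
    linarith [h1, h2, h3]
  · -- small
    intro j
    have hbound : ∀ k ∈ K (ψ j), k ∈ A → k < M₁ j + 1 := by
      intro k hkK hkA
      obtain ⟨j'', hj''⟩ := hkA
      -- move to stage max (j+1) j''
      have hkB : k ∈ (st (max (j+1) j'')).2.2 :=
        hBmono' j'' (max (j+1) j'') (le_max_right _ _) hj''
      rcases hBnew (j+1) (max (j+1) j'') (le_max_left _ _) k hkB with h | h
      · -- k ∈ B_{j+1} = B_j ∪ S
        rw [hB1] at h
        rcases Finset.mem_union.1 h with hh | hh
        · have := hBle j k hh
          have : k ≤ M₁ j := le_trans this le_sup_left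
          omega
        · have hk2 : k ∈ K (φ j) := (Finset.mem_filter.1 hh).1
          have : k ≤ (K (φ j)).sup id := Finset.le_sup (f := id) hk2
          have : k ≤ M₁ j := le_trans this le_sup_right
          omega
      · -- k > M_{j+1} ≥ sup K (ψ j): contradiction
        exfalso
        rw [hM1] at h
        have h1 : k ≤ (K (ψ j)).sup id := Finset.le_sup (f := id) hkK
        have h2 : (K (ψ j)).sup id ≤ M₁ j ⊔ (K (ψ j)).sup id := le_sup_right
        omega
    have := aux_sum_indicator_le (ν (ψ j)) (h0 _) (K (ψ j)) (M₁ j + 1) hbound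
    have h8 := hx3 (φ j) (M₁ j)
    calc ∑ k ∈ K (ψ j), A.indicator (ν (ψ j)) k ≤ ∑ k ∈ Finset.range (M₁ j + 1), ν (ψ j) k := this
    _ ≤ 1/8 := h8
    _ ≤ 1/4 := by norm_num


lemma aux_abs_le_norm {X : Type*} [MetricSpace X]
    (Λ : BoundedContinuousFunction X ℝ →ₗ[ℝ] ℝ)
    (hpos : ∀ f : BoundedContinuousFunction X ℝ, 0 ≤ f → 0 ≤ Λ f) (hone : Λ 1 = 1)
    (f : BoundedContinuousFunction X ℝ) : |Λ f| ≤ ‖f‖ := by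
  have h1 : 0 ≤ Λ (‖f‖ • (1 : BoundedContinuousFunction X ℝ) - f) := by
    refine hpos _ ?_
    intro x
    show (0 : BoundedContinuousFunction X ℝ) x ≤ (‖f‖ • (1 : BoundedContinuousFunction X ℝ) - f) x
    simp only [BoundedContinuousFunction.coe_sub, BoundedContinuousFunction.coe_smul,
      BoundedContinuousFunction.coe_one, Pi.sub_apply, Pi.smul_apply, Pi.one_apply,
      BoundedContinuousFunction.coe_zero, Pi.zero_apply, smul_eq_mul, mul_one]
    have := f.norm_coe_le_norm x
    have := abs_le.1 ((Real.norm_eq_abs _) ▸ this)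
    linarith [this.2]
  have h2 : 0 ≤ Λ (‖f‖ • (1 : BoundedContinuousFunction X ℝ) + f) := by
    refine hpos _ ?_
    intro x
    show (0 : BoundedContinuousFunction X ℝ) x ≤ (‖f‖ • (1 : BoundedContinuousFunction X ℝ) + f) x
    simp only [BoundedContinuousFunction.coe_add, BoundedContinuousFunction.coe_smul,
      BoundedContinuousFunction.coe_one, Pi.add_apply, Pi.smul_apply, Pi.one_apply,
      BoundedContinuousFunction.coe_zero, Pi.zero_apply, smul_eq_mul, mul_one]
    have := f.norm_coe_le_norm x
    have := abs_le.1 ((Real.norm_eq_abs _) ▸ this)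
    linarith [this.1]
  rw [map_sub, LinearMap.map_smul, hone, smul_eq_mul, mul_one] at h1
  rw [map_add, LinearMap.map_smul, hone, smul_eq_mul, mul_one] at h2
  rw [abs_le]
  constructor <;> linarith

lemma aux_approx {X : Type*} [MetricSpace X] [MeasurableSpace X] [BorelSpace X] [Nonempty X]
    (Λ : BoundedContinuousFunction X ℝ →ₗ[ℝ] ℝ)
    (hpos : ∀ f : BoundedContinuousFunction X ℝ, 0 ≤ f → 0 ≤ Λ f) (hone : Λ 1 = 1)
    (ε : ℝ) (hε : 0 < ε) (t : Finset X) (hcov : ∀ z : X, ∃ y ∈ t, dist z y < ε) :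
    ∃ P : Measure X, IsProbabilityMeasure P ∧ (∃ s : Finset X, P ↑s = 1) ∧
      ∀ (f : BoundedContinuousFunction X ℝ) (δ : ℝ), 0 ≤ δ →
        (∀ a b : X, dist a b < 2*ε → |f a - f b| ≤ δ) →
        |(∫ z, f z ∂P) - Λ f| ≤ δ := by
  classical
  set g : X → X → ℝ := fun y z => max (2*ε - dist z y) 0 with hg
  have hgcont : ∀ y, Continuous (g y) :=
    fun y => (continuous_const.sub (continuous_id.dist continuous_const)).max continuous_const
  have hg0 : ∀ y z, 0 ≤ g y z := fun y z => le_max_right _ _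
  have hgle : ∀ y z, g y z ≤ 2*ε := fun y z => max_le (by have := dist_nonneg (x := z) (y := y); linarith) (by linarith)
  set h : X → ℝ := fun z => ∑ y ∈ t, g y z with hh
  have hhcont : Continuous h := continuous_finset_sum _ (fun y _ => hgcont y)
  have hhge : ∀ z, ε ≤ h z := by
    intro z
    obtain ⟨y, hy, hd⟩ := hcov z
    have h1 : ε ≤ g y z := le_trans (by linarith) (le_max_left _ _)
    exact le_trans h1 (Finset.single_le_sum (fun y _ => hg0 y z) hy)
  have hhpos : ∀ z, 0 < h z := fun z => lt_of_lt_of_le hε (hhge z)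
  have hgleh : ∀ y ∈ t, ∀ z, g y z ≤ h z := fun y hy z =>
    Finset.single_le_sum (fun y _ => hg0 y z) hy
  set φ : X → BoundedContinuousFunction X ℝ := fun y =>
    BoundedContinuousFunction.ofNormedAddCommGroup (fun z => g y z / h z)
      ((hgcont y).div hhcont (fun z => ne_of_gt (hhpos z))) 2
      (by
        intro z
        rw [Real.norm_eq_abs, abs_of_nonneg (div_nonneg (hg0 y z) (le_of_lt (hhpos z)))]
        rw [div_le_iff₀ (hhpos z)]
        calc g y z ≤ 2*ε := hgle y z
        _ ≤ 2 * h z := by have := hhge z; linarith) with hφ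
  have hφapp : ∀ y z, φ y z = g y z / h z := fun y z => rfl
  have hφ0 : ∀ y, 0 ≤ φ y := by
    intro y z
    show (0 : BoundedContinuousFunction X ℝ) z ≤ φ y z
    simp only [BoundedContinuousFunction.coe_zero, Pi.zero_apply]
    rw [hφapp]
    exact div_nonneg (hg0 y z) (le_of_lt (hhpos z))
  have hφsum : ∑ y ∈ t, φ y = 1 := by
    ext z
    rw [BoundedContinuousFunction.coe_sum]
    simp only [Finset.sum_apply]
    simp only [hφapp]
    rw [← Finset.sum_div, div_self (ne_of_gt (hhpos z))]
    simp
  set w : X → ℝ := fun y => Λ (φ y) with hwdef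
  have hw0 : ∀ y, 0 ≤ w y := fun y => hpos _ (hφ0 y)
  have hwsum : ∑ y ∈ t, w y = 1 := by
    rw [hwdef]
    rw [← map_sum]
    rw [hφsum, hone]
  set P : Measure X := ∑ y ∈ t, ((w y).toNNReal : ℝ≥0) • Measure.dirac y with hP
  have hPapp : ∀ s : Set X, P s = ∑ y ∈ t, ((w y).toNNReal : ℝ≥0∞) * Measure.dirac y s := by
    intro s
    rw [hP, Measure.finset_sum_apply]
    refine Finset.sum_congr rfl fun y hy => ?_
    rw [Measure.smul_apply]
    rw [ENNReal.smul_def, smul_eq_mul]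
  have hsum1 : ∑ y ∈ t, ((w y).toNNReal : ℝ≥0∞) = 1 := by
    rw [← ENNReal.coe_finset_sum]
    norm_cast
    rw [← Real.toNNReal_sum_of_nonneg (fun y _ => hw0 y), hwsum, Real.toNNReal_one]
  have hprob : IsProbabilityMeasure P := by
    constructor
    rw [hPapp]
    simp only [measure_univ, mul_one]
    exact hsum1
  have hfin : P ↑t = 1 := by
    rw [hPapp]
    rw [Finset.sum_congr rfl (fun y hy => ?_), hsum1]
    rw [Measure.dirac_apply_of_mem (by exact hy), mul_one]
  refine ⟨P, hprob, ⟨t, hfin⟩, ?_⟩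
  intro f δ hδ hmod
  haveI : ∀ y : X, IsFiniteMeasure (((w y).toNNReal : ℝ≥0) • Measure.dirac y) :=
    fun y => MeasureTheory.isFiniteMeasureSMulNNReal
  have hint : (∫ z, f z ∂P) = ∑ y ∈ t, w y * f y := by
    rw [hP, MeasureTheory.integral_finset_sum_measure (fun y _ => f.integrable _)]
    refine Finset.sum_congr rfl fun y hy => ?_
    rw [ENNReal.smul_def, integral_smul_measure, integral_dirac]
    simp [Real.coe_toNNReal _ (hw0 y)]
  have hrep : ∑ y ∈ t, w y * f y = Λ (∑ y ∈ t, f y • φ y) := by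
    rw [map_sum]
    exact Finset.sum_congr rfl fun y hy => by
      rw [LinearMap.map_smul, smul_eq_mul]; exact mul_comm _ _
  have hdiff : |(∫ z, f z ∂P) - Λ f| = |Λ (∑ y ∈ t, f y • φ y - f)| := by
    rw [hint, hrep, map_sub]
  rw [hdiff]
  refine le_trans (aux_abs_le_norm Λ hpos hone _) ?_
  rw [BoundedContinuousFunction.norm_le hδ]
  intro z
  rw [Real.norm_eq_abs]
  have hφz : ∑ y ∈ t, φ y z = 1 := by
    have h1 : (∑ y ∈ t, φ y) z = (1 : BoundedContinuousFunction X ℝ) z := by rw [hφsum]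
    rw [BoundedContinuousFunction.coe_sum] at h1
    simpa using h1
  have happ : (∑ y ∈ t, f y • φ y - f) z = ∑ y ∈ t, (f y - f z) * (φ y z) := by
    simp only [BoundedContinuousFunction.coe_sub, Pi.sub_apply]
    rw [BoundedContinuousFunction.coe_sum]
    simp only [Finset.sum_apply, BoundedContinuousFunction.coe_smul, Pi.smul_apply, smul_eq_mul]
    simp only [sub_mul]
    rw [Finset.sum_sub_distrib, ← Finset.mul_sum, hφz, mul_one]
  rw [happ]
  refine le_trans (Finset.abs_sum_le_sum_abs _ _) ?_
  have hterm : ∀ y ∈ t, |(f y - f z) * (φ y z)| ≤ δ * (φ y z) := by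
    intro y hy
    have hφge : (0:ℝ) ≤ φ y z := by
      rw [hφapp]; exact div_nonneg (hg0 y z) (le_of_lt (hhpos z))
    rw [abs_mul, abs_of_nonneg hφge]
    by_cases hz : φ y z = 0
    · rw [hz, mul_zero, mul_zero]
    · have hpos' : 0 < φ y z := lt_of_le_of_ne
        (by rw [hφapp]; exact div_nonneg (hg0 y z) (le_of_lt (hhpos z))) (Ne.symm hz)
    
      have hgz : 0 < g y z := by
        by_contra hgz
        have : g y z = 0 := le_antisymm (not_lt.mp hgz) (hg0 y z)
        rw [hφapp, this, zero_div] at hpos'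
        exact lt_irrefl _ hpos'
      have hdz : dist z y < 2*ε := by
        by_contra hd
        have : 2*ε - dist z y ≤ 0 := by push_neg at hd; linarith
        have : g y z = 0 := max_eq_right this
        exact ne_of_gt hgz this
      have := hmod y z (by rw [dist_comm]; exact hdz)
      exact mul_le_mul_of_nonneg_right this (le_of_lt hpos')
  refine le_trans (Finset.sum_le_sum hterm) ?_
  rw [← Finset.mul_sum, hφz, mul_one]


/-- A separable metric space `X` is totally bounded iff for every normalized
positive linear functional `Λ` on `C_b(X)` there is a sequence of finitely supported Borel
probability measures `P n` with `∫ f dP n → Λ f` for every uniformly continuous `f ∈ C_b(X)`. -/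
theorem totallyBounded_iff_every_functional_weak_limit_of_finitely_supported
    {X : Type*} [MetricSpace X] [TopologicalSpace.SeparableSpace X]
    [MeasurableSpace X] [BorelSpace X] :
    TotallyBounded (Set.univ : Set X) ↔
      ∀ Λ : BoundedContinuousFunction X ℝ →ₗ[ℝ] ℝ,
        (∀ f : BoundedContinuousFunction X ℝ, 0 ≤ f → 0 ≤ Λ f) →
        Λ 1 = 1 →
        ∃ P : ℕ → Measure X,
          (∀ n, IsProbabilityMeasure (P n)) ∧
          (∀ n, ∃ s : Finset X, P n ↑s = 1) ∧
          (∀ f : BoundedContinuousFunction X ℝ, UniformContinuous ⇑f →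
            Tendsto (fun n => ∫ x, f x ∂(P n)) atTop (𝓝 (Λ f))) := by
  classical
  constructor
  · -- forward direction
    intro hTB Λ hpos hone
    rcases isEmpty_or_nonempty X with hX | hX
    · exfalso
      have h10 : (1 : BoundedContinuousFunction X ℝ) = 0 := by
        ext z; exact (hX.elim z)
      rw [h10, map_zero] at hone
      exact one_ne_zero hone.symm
    · have hnet : ∀ n : ℕ, ∃ t : Finset X, ∀ z : X, ∃ y ∈ t, dist z y < 1/((n:ℝ)+1) := by
        intro n
        obtain ⟨t, htfin, htcov⟩ := Metric.totallyBounded_iff.mp hTB (1/((n:ℝ)+1)) (by positivity)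
        refine ⟨htfin.toFinset, fun z => ?_⟩
        have := htcov (Set.mem_univ z)
        simp only [Set.mem_iUnion] at this
        obtain ⟨y, hy, hzy⟩ := this
        exact ⟨y, htfin.mem_toFinset.2 hy, Metric.mem_ball.1 hzy⟩
      choose t ht using hnet
      have happrox := fun n : ℕ => aux_approx Λ hpos hone (1/((n:ℝ)+1)) (by positivity) (t n) (ht n)
      choose P hP1 hP2 hP3 using happrox
      refine ⟨P, hP1, hP2, ?_⟩
      intro f hf
      rw [Metric.tendsto_atTop]
      intro δ hδ
      obtain ⟨η, hη, hmod⟩ := Metric.uniformContinuous_iff.1 hf (δ/2) (by linarith)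
      obtain ⟨N, hN⟩ := exists_nat_gt (2/η)
      refine ⟨N, fun n hn => ?_⟩
      have hNn : (N:ℝ) ≤ (n:ℝ) := by exact_mod_cast hn
      have hεη : 2 * (1/((n:ℝ)+1)) ≤ η := by
        have h2 : 2/η < (n:ℝ)+1 := by linarith
        rw [div_lt_iff₀ hη] at h2
        rw [mul_one_div, div_le_iff₀ (by positivity)]
        linarith
      have hb := hP3 n f (δ/2) (by linarith) ?_
      · rw [Real.dist_eq]
        calc |(∫ z, f z ∂(P n)) - Λ f| ≤ δ/2 := hb
        _ < δ := by linarith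
      · intro a b hab
        have : dist a b < η := lt_of_lt_of_le hab hεη
        have := hmod this
        rw [Real.dist_eq] at this
        exact le_of_lt this
  · -- backward direction
    intro hmain
    by_contra hTB
    rw [Metric.totallyBounded_iff] at hTB
    push_neg at hTB
    obtain ⟨ε, hε, hcov⟩ := hTB
    -- a uniformly separated sequence
    haveI : Std.Symm (fun a b : X => ε ≤ dist a b) :=
      ⟨fun a b h => by rwa [dist_comm]⟩
    obtain ⟨x, -, hxsep⟩ := exists_seq_of_forall_finset_exists' (fun _ : X => True)
      (fun a b => ε ≤ dist a b) (by
        intro s _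
        have h1 := hcov ↑s s.finite_toSet
        rw [Set.not_subset] at h1
        obtain ⟨z, -, hz⟩ := h1
        refine ⟨z, trivial, fun a ha => ?_⟩
        simp only [Set.mem_iUnion] at hz
        push_neg at hz
        have := hz a ha
        rw [Metric.mem_ball] at this
        push_neg at this
        rwa [dist_comm] at this)
    have hx : ∀ m n : ℕ, m ≠ n → ε ≤ dist (x m) (x n) := fun m n hmn => hxsep hmn
    haveI : Nonempty X := ⟨x 0⟩
    set U : Ultrafilter ℕ := Filter.hyperfilter ℕ with hU
    have hlim : ∀ f : BoundedContinuousFunction X ℝ,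
        ∃ a : ℝ, Tendsto (fun k => f (x k)) (U : Filter ℕ) (𝓝 a) := by
      intro f
      obtain ⟨a, -, ha⟩ := (isCompact_Icc (a := -‖f‖) (b := ‖f‖)).ultrafilter_le_nhds
        (U.map (fun k : ℕ => f (x k))) (by
          rw [Filter.le_principal_iff]
          rw [Ultrafilter.coe_map, Filter.mem_map]
          refine Filter.univ_mem' fun k => ?_
          have := f.norm_coe_le_norm (x k)
          rw [Real.norm_eq_abs] at this
          exact Set.mem_Icc.2 (abs_le.1 this))
      exact ⟨a, ha⟩
    choose L hL using hlim
    have hLadd : ∀ f g : BoundedContinuousFunction X ℝ, L (f + g) = L f + L g := by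
      intro f g
      refine tendsto_nhds_unique (hL (f+g)) (((hL f).add (hL g)).congr fun k => ?_)
      simp
    have hLsmul : ∀ (c : ℝ) (f : BoundedContinuousFunction X ℝ), L (c • f) = c * L f := by
      intro c f
      refine tendsto_nhds_unique (hL (c • f)) (((hL f).const_mul c).congr fun k => ?_)
      simp
    set Λ : BoundedContinuousFunction X ℝ →ₗ[ℝ] ℝ :=
      { toFun := L
        map_add' := hLadd
        map_smul' := hLsmul } with hΛdef
    have hΛ : ∀ f : BoundedContinuousFunction X ℝ,
        Tendsto (fun k => f (x k)) (U : Filter ℕ) (𝓝 (Λ f)) := hL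
    have hpos : ∀ f : BoundedContinuousFunction X ℝ, 0 ≤ f → 0 ≤ Λ f := by
      intro f hf
      refine ge_of_tendsto (hΛ f) (Filter.Eventually.of_forall fun k => ?_)
      exact hf (x k)
    have hone : Λ 1 = 1 := by
      refine tendsto_nhds_unique (hΛ 1) ?_
      have : (fun k => (1 : BoundedContinuousFunction X ℝ) (x k)) = fun _ => (1:ℝ) := by
        ext k; simp
      rw [this]
      exact tendsto_const_nhds
    obtain ⟨P, hPprob, hPfin, hPconv⟩ := hmain Λ hpos hone
    choose s hs using hPfin
    haveI := hPprob
    -- the bump functions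
    have hε3 : (0:ℝ) < ε/3 := by linarith
    set F : Set ℕ → BoundedContinuousFunction X ℝ := fun A =>
      BoundedContinuousFunction.ofNormedAddCommGroup
        (fun z => max (1 - (3/ε) * Metric.infDist z (x '' A)) 0)
        (((continuous_const.sub (continuous_const.mul
          (Metric.continuous_infDist_pt _))).max continuous_const)) 1
        (by
          intro z
          rw [Real.norm_eq_abs, abs_le]
          constructor
          · have := le_max_right (1 - (3/ε) * Metric.infDist z (x '' A)) 0
            linarith
          · refine max_le ?_ (by norm_num)
            have h1 : 0 ≤ (3/ε) * Metric.infDist z (x '' A) :=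
              mul_nonneg (by positivity) Metric.infDist_nonneg
            linarith) with hF
    have hFapp : ∀ A z, F A z = max (1 - (3/ε) * Metric.infDist z (x '' A)) 0 :=
      fun A z => rfl
    have hFuc : ∀ A, UniformContinuous ⇑(F A) := by
      intro A
      rw [Metric.uniformContinuous_iff]
      intro δ hδ
      refine ⟨δ * ε / 3, by positivity, fun {a b} hab => ?_⟩
      rw [Real.dist_eq, hFapp, hFapp]
      have h1 : |(1 - (3/ε) * Metric.infDist a (x '' A)) -
          (1 - (3/ε) * Metric.infDist b (x '' A))| ≤ (3/ε) * dist a b := by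
        have h2 : |Metric.infDist a (x '' A) - Metric.infDist b (x '' A)| ≤ dist a b := by
          rw [abs_sub_le_iff]
          constructor
          · have := Metric.infDist_le_infDist_add_dist (x := a) (y := b) (s := x '' A)
            linarith
          · have := Metric.infDist_le_infDist_add_dist (x := b) (y := a) (s := x '' A)
            rw [dist_comm] at this
            linarith
        have h3 : (1 - (3/ε) * Metric.infDist a (x '' A)) -
            (1 - (3/ε) * Metric.infDist b (x '' A)) =
            (3/ε) * (Metric.infDist b (x '' A) - Metric.infDist a (x '' A)) := by ring
        rw [h3, abs_mul, abs_of_nonneg (by positivity : (0:ℝ) ≤ 3/ε)]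
        rw [abs_sub_comm]
        exact mul_le_mul_of_nonneg_left h2 (by positivity)
      refine lt_of_le_of_lt (le_trans (abs_max_sub_max_le_abs _ _ _) h1) ?_
      have h4 : (3/ε) * dist a b < (3/ε) * (δ * ε / 3) :=
        mul_lt_mul_of_pos_left hab (by positivity)
      have h5 : (3/ε) * (δ * ε / 3) = δ := by field_simp
      linarith
    -- values at the sequence points
    have hF1 : ∀ (A : Set ℕ) (j : ℕ), j ∈ A → F A (x j) = 1 := by
      intro A j hj
      rw [hFapp]
      rw [Metric.infDist_zero_of_mem (Set.mem_image_of_mem x hj)]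
      norm_num
    have hF0 : ∀ (A : Set ℕ), A.Nonempty → ∀ (j : ℕ), j ∉ A → F A (x j) = 0 := by
      intro A hA j hj
      rw [hFapp]
      have hge : ε/3 ≤ Metric.infDist (x j) (x '' A) := by
        by_contra hlt
        push_neg at hlt
        obtain ⟨y, ⟨k, hk, rfl⟩, hy⟩ := (Metric.infDist_lt_iff (hA.image x)).1 hlt
        have hkj : k ≠ j := fun h => hj (h ▸ hk)
        have := hx j k (fun h => hkj h.symm)
        linarith
      refine max_eq_right ?_
      have h1 : (3/ε) * (ε/3) ≤ (3/ε) * Metric.infDist (x j) (x '' A) :=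
        mul_le_mul_of_nonneg_left hge (by positivity)
      have h2 : (3/ε) * (ε/3) = 1 := by field_simp
      linarith
    have hΛF1 : Λ (F Set.univ) = 1 := by
      refine tendsto_nhds_unique (hΛ (F Set.univ)) ?_
      have : (fun k => F Set.univ (x k)) = fun _ => (1:ℝ) := by
        ext k; exact hF1 Set.univ k trivial
      rw [this]
      exact tendsto_const_nhds
    have hΛFk : ∀ k : ℕ, Λ (F {k}) = 0 := by
      intro k
      refine tendsto_nhds_unique (hΛ (F {k})) ?_
      have hev : ∀ᶠ j in (U : Filter ℕ), F {k} (x j) = 0 := by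
        have hcof : ∀ᶠ j in Filter.cofinite, j ≠ k := Filter.eventually_cofinite_ne k
        have h2 : ∀ᶠ j in (U : Filter ℕ), j ≠ k := Filter.hyperfilter_le_cofinite hcof
        exact h2.mono (fun j hj => hF0 {k} ⟨k, rfl⟩ j (by simpa using hj))
      exact tendsto_const_nhds.congr' (hev.mono fun j hj => hj.symm)
    -- the chooser map and supports
    set c : X → ℕ := fun z => if h : ∃ k, dist z (x k) < ε/3 then h.choose else 0 with hc
    have hcval : ∀ (z : X) (k : ℕ), dist z (x k) < ε/3 → c z = k := by
      intro z k hk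
      have hex : ∃ k', dist z (x k') < ε/3 := ⟨k, hk⟩
      rw [hc]
      simp only [dif_pos hex]
      by_contra hne
      have hspec := hex.choose_spec
      have := hx hex.choose k hne
      have htri : dist (x hex.choose) (x k) ≤ dist z (x hex.choose) + dist z (x k) := by
        rw [dist_comm z (x hex.choose)]
        exact dist_triangle _ _ _
      linarith
    set K : ℕ → Finset ℕ := fun n => (s n).image c with hK
    set ν : ℕ → ℕ → ℝ := fun n k => ∫ z, F {k} z ∂(P n) with hν
    have hmem : ∀ n, ∀ᵐ z ∂(P n), z ∈ (↑(s n) : Set X) := by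
      intro n
      have hcompl : P n ((↑(s n) : Set X)ᶜ) = 0 :=
        (prob_compl_eq_zero_iff (s n).measurableSet).2 (hs n)
      rw [MeasureTheory.ae_iff]
      exact hcompl
    -- pointwise expansion on the support
    have hFk0 : ∀ (k : ℕ) (z : X), ε/3 ≤ dist z (x k) → F {k} z = 0 := by
      intro k z hd
      rw [hFapp]
      rw [Set.image_singleton, Metric.infDist_singleton]
      refine max_eq_right ?_
      have h1 : (3/ε) * (ε/3) ≤ (3/ε) * dist z (x k) :=
        mul_le_mul_of_nonneg_left hd (by positivity)
      have h2 : (3/ε) * (ε/3) = 1 := by field_simp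
      linarith
    have hpt : ∀ (A : Set ℕ), A.Nonempty → ∀ n, ∀ z ∈ (↑(s n) : Set X),
        F A z = ∑ k ∈ K n, A.indicator (fun k' => F {k'} z) k := by
      intro A hA n z hz
      by_cases hcase : ∃ k₀ ∈ A, dist z (x k₀) < ε/3
      · obtain ⟨k₀, hk₀A, hk₀d⟩ := hcase
        have hk₀K : k₀ ∈ K n := by
          rw [hK]
          exact Finset.mem_image.2 ⟨z, hz, hcval z k₀ hk₀d⟩
        have hsum : ∑ k ∈ K n, A.indicator (fun k' => F {k'} z) k = F {k₀} z := by
          rw [Finset.sum_eq_single_of_mem k₀ hk₀K]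
          · exact Set.indicator_of_mem hk₀A _
          · intro b hb hbne
            have hbd : ε/3 ≤ dist z (x b) := by
              by_contra hlt
              push_neg at hlt
              have := hx b k₀ hbne
              have htri : dist (x b) (x k₀) ≤ dist z (x b) + dist z (x k₀) := by
                rw [dist_comm z (x b)]
                exact dist_triangle _ _ _
              linarith
            by_cases hbA : b ∈ A
            · rw [Set.indicator_of_mem hbA]
              exact hFk0 b z hbd
            · exact Set.indicator_of_notMem hbA _
        rw [hsum]
        -- F A z = F {k₀} z
        have hinf : Metric.infDist z (x '' A) = dist z (x k₀) := by
          refine le_antisymm (Metric.infDist_le_dist_of_mem ⟨k₀, hk₀A, rfl⟩) ?_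
          by_contra hlt
          push_neg at hlt
          obtain ⟨y, ⟨k, hkA, rfl⟩, hy⟩ := (Metric.infDist_lt_iff (hA.image x)).1 hlt
          by_cases hkk : k = k₀
          · rw [hkk] at hy
            exact lt_irrefl _ hy
          · have hbd : ε/3 ≤ dist z (x k) := by
              by_contra hlt2
              push_neg at hlt2
              have := hx k k₀ hkk
              have htri : dist (x k) (x k₀) ≤ dist z (x k) + dist z (x k₀) := by
                rw [dist_comm z (x k)]
                exact dist_triangle _ _ _
              linarith
            have : dist z (x k₀) < ε/3 := hk₀d
            linarith
        rw [hFapp, hFapp, hinf, Set.image_singleton, Metric.infDist_singleton]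
      · push_neg at hcase
        have hge : ε/3 ≤ Metric.infDist z (x '' A) := by
          by_contra hlt
          push_neg at hlt
          obtain ⟨y, ⟨k, hkA, rfl⟩, hy⟩ := (Metric.infDist_lt_iff (hA.image x)).1 hlt
          exact absurd hy (not_lt.2 (hcase k hkA))
        have hlhs : F A z = 0 := by
          rw [hFapp]
          refine max_eq_right ?_
          have h1 : (3/ε) * (ε/3) ≤ (3/ε) * Metric.infDist z (x '' A) :=
            mul_le_mul_of_nonneg_left hge (by positivity)
          have h2 : (3/ε) * (ε/3) = 1 := by field_simp
          linarith
        rw [hlhs]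
        refine (Finset.sum_eq_zero fun k hk => ?_).symm
        by_cases hkA : k ∈ A
        · rw [Set.indicator_of_mem hkA]
          exact hFk0 k z (hcase k hkA)
        · exact Set.indicator_of_notMem hkA _
    -- integral identity
    have hνid : ∀ (A : Set ℕ), A.Nonempty → ∀ n,
        ∫ z, F A z ∂(P n) = ∑ k ∈ K n, A.indicator (ν n) k := by
      intro A hA n
      have hae : (fun z => F A z) =ᵐ[P n]
          (fun z => ∑ k ∈ K n, A.indicator (fun k' => F {k'} z) k) :=
        (hmem n).mono fun z hz => hpt A hA n z hz
      rw [MeasureTheory.integral_congr_ae hae]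
      have hint : ∀ k ∈ K n, MeasureTheory.Integrable
          (fun z => A.indicator (fun k' => F {k'} z) k) (P n) := by
        intro k _
        by_cases hkA : k ∈ A
        · simp only [Set.indicator_of_mem hkA]
          exact (F {k}).integrable _
        · simp only [Set.indicator_of_notMem hkA]
          exact MeasureTheory.integrable_zero _ _ _
      rw [MeasureTheory.integral_finset_sum _ hint]
      refine Finset.sum_congr rfl fun k _ => ?_
      by_cases hkA : k ∈ A
      · simp only [Set.indicator_of_mem hkA]; rfl
      · simp only [Set.indicator_of_notMem hkA, MeasureTheory.integral_zero]
    -- hypotheses for the oscillation lemma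
    have hν0 : ∀ n k, 0 ≤ ν n k := by
      intro n k
      refine MeasureTheory.integral_nonneg fun z => ?_
      rw [hFapp]
      exact le_max_right _ _
    have htsum : Tendsto (fun n => ∑ k ∈ K n, ν n k) atTop (𝓝 1) := by
      have heq : ∀ n, ∑ k ∈ K n, ν n k = ∫ z, F Set.univ z ∂(P n) := by
        intro n
        rw [hνid Set.univ ⟨0, trivial⟩ n]
        refine Finset.sum_congr rfl fun k _ => ?_
        rw [Set.indicator_univ]
      have := hPconv (F Set.univ) (hFuc Set.univ)
      rw [hΛF1] at this
      exact this.congr (fun n => (heq n).symm)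
    have ht : ∀ᶠ n in atTop, 3/4 ≤ ∑ k ∈ K n, ν n k :=
      htsum.eventually (eventually_ge_nhds (by norm_num))
    have hkk : ∀ k, Tendsto (fun n => ν n k) atTop (𝓝 0) := by
      intro k
      have := hPconv (F {k}) (hFuc {k})
      rw [hΛFk k] at this
      exact this
    obtain ⟨A, φ, ψ, hφ, hψ, hbig, hsmall⟩ := aux_oscillation ν K hν0 ht hkk
    have hAne : A.Nonempty := by
      by_contra hA
      rw [Set.not_nonempty_iff_eq_empty] at hA
      have := hbig 0
      rw [hA] at this
      simp only [Set.indicator_empty, Finset.sum_const_zero] at this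
      norm_num at this
    have hconvA := hPconv (F A) (hFuc A)
    have h1 : 1/2 ≤ Λ (F A) := by
      refine ge_of_tendsto (hconvA.comp hφ) (Filter.Eventually.of_forall fun j => ?_)
      show 1/2 ≤ ∫ z, F A z ∂(P (φ j))
      rw [hνid A hAne (φ j)]
      exact hbig j
    have h2 : Λ (F A) ≤ 1/4 := by
      refine le_of_tendsto (hconvA.comp hψ) (Filter.Eventually.of_forall fun j => ?_)
      show ∫ z, F A z ∂(P (ψ j)) ≤ 1/4
      rw [hνid A hAne (ψ j)]
      exact hsmall j
    linarith
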